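/- Let H be a finite-dimensional complex inner product space and let B and B' be maximal Boolean sublattices of Submodule ℂ H. Then there exists a unitary operator U on H such that { Submodule.map U K | K ∈ B } = B'. -/

import Mathlib

open Submodule

/-- A subset `B` of the lattice of subspaces of a complex inner product space is a
*Boolean sublattice* if it contains `⊥` and `⊤`, is closed under `⊓`, `⊔` and
orthogonal complement, and satisfies the distributive law on its elements. -/
def IsBooleanSublattice {H : Type*} [NormedAddCommGroup H] [InnerProductSpace ℂ H]
    (B : Set (Submodule ℂ H)) : Prop :=
  ⊥ ∈ B ∧ ⊤ ∈ B ∧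
  (∀ x ∈ B, ∀ y ∈ B, x ⊓ y ∈ B) ∧
  (∀ x ∈ B, ∀ y ∈ B, x ⊔ y ∈ B) ∧
  (∀ x ∈ B, xᗮ ∈ B) ∧
  (∀ x ∈ B, ∀ y ∈ B, ∀ z ∈ B, x ⊓ (y ⊔ z) = (x ⊓ y) ⊔ (x ⊓ z))

/-- A Boolean sublattice is *maximal* if it is not properly contained in any other
Boolean sublattice. -/
def IsMaximalBooleanSublattice {H : Type*} [NormedAddCommGroup H] [InnerProductSpace ℂ H]
    (B : Set (Submodule ℂ H)) : Prop :=
  IsBooleanSublattice B ∧ ∀ B' : Set (Submodule ℂ H), IsBooleanSublattice B' → B ⊆ B' → B' = B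


noncomputable section BoolAux

variable {H : Type*} [NormedAddCommGroup H] [InnerProductSpace ℂ H] [FiniteDimensional ℂ H]

/-- The collection of spans of subsets of a family of vectors. -/
def basisLat {ι : Type*} (e : ι → H) : Set (Submodule ℂ H) :=
  {K | ∃ S : Set ι, K = Submodule.span ℂ (e '' S)}

variable {ι : Type*} [Fintype ι]

lemma mem_span_onb_image (b : OrthonormalBasis ι ℂ H) {S : Set ι} {x : H} :
    x ∈ span ℂ (⇑b '' S) ↔ ∀ i ∉ S, b.repr x i = 0 := by
  classical
  rw [← b.coe_toBasis, b.toBasis.mem_span_image, Finsupp.support_subset_iff]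
  simp_rw [b.coe_toBasis_repr_apply]

lemma onb_span_orthogonal (b : OrthonormalBasis ι ℂ H) (S : Set ι) :
    (span ℂ (⇑b '' S))ᗮ = span ℂ (⇑b '' Sᶜ) := by
  ext x
  rw [mem_span_onb_image b, Submodule.mem_orthogonal]
  constructor
  · intro hx i hi
    rw [Set.notMem_compl_iff] at hi
    rw [b.repr_apply_apply]
    exact hx _ (Submodule.subset_span ⟨i, hi, rfl⟩)
  · intro hx u hu
    rw [← b.sum_inner_mul_inner u x]
    apply Finset.sum_eq_zero
    intro i _
    by_cases hiS : i ∈ S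
    · have h0 : b.repr x i = 0 := hx i (by simpa using hiS)
      rw [b.repr_apply_apply] at h0
      rw [h0, mul_zero]
    · have h0 : b.repr u i = 0 := (mem_span_onb_image b).1 hu i hiS
      rw [b.repr_apply_apply] at h0
      rw [← inner_conj_symm, h0, map_zero, zero_mul]

lemma onb_span_inf (b : OrthonormalBasis ι ℂ H) (S S' : Set ι) :
    span ℂ (⇑b '' S) ⊓ span ℂ (⇑b '' S') = span ℂ (⇑b '' (S ∩ S')) := by
  ext x
  simp only [Submodule.mem_inf, mem_span_onb_image]
  constructor
  · rintro ⟨h1, h2⟩ i hi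
    rcases (by tauto : i ∉ S ∨ i ∉ S') with h | h
    · exact h1 i h
    · exact h2 i h
  · intro h
    exact ⟨fun i hi => h i fun hm => hi hm.1, fun i hi => h i fun hm => hi hm.2⟩

lemma onb_span_sup {ι : Type*} (b : ι → H) (S S' : Set ι) :
    span ℂ (b '' S) ⊔ span ℂ (b '' S') = span ℂ (b '' (S ∪ S')) := by
  rw [Set.image_union, Submodule.span_union]

lemma basisLat_boolean (b : OrthonormalBasis ι ℂ H) : IsBooleanSublattice (basisLat ⇑b) := by
  refine ⟨⟨∅, by simp⟩, ⟨Set.univ, ?_⟩, ?_, ?_, ?_, ?_⟩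
  · rw [Set.image_univ, ← b.coe_toBasis, b.toBasis.span_eq]
  · rintro x ⟨S, rfl⟩ y ⟨S', rfl⟩
    exact ⟨S ∩ S', onb_span_inf b S S'⟩
  · rintro x ⟨S, rfl⟩ y ⟨S', rfl⟩
    exact ⟨S ∪ S', onb_span_sup ⇑b S S'⟩
  · rintro x ⟨S, rfl⟩
    exact ⟨Sᶜ, onb_span_orthogonal b S⟩
  · rintro x ⟨S1, rfl⟩ y ⟨S2, rfl⟩ z ⟨S3, rfl⟩
    rw [onb_span_sup, onb_span_inf, onb_span_inf, onb_span_inf, onb_span_sup,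
      Set.inter_union_distrib_left]

lemma basisLat_comp_equiv {ι ι' : Type*} (σ : ι' ≃ ι) (f : ι → H) :
    basisLat (f ∘ σ) = basisLat f := by
  ext K
  constructor
  · rintro ⟨S, rfl⟩
    exact ⟨σ '' S, by rw [Set.image_comp]⟩
  · rintro ⟨S, rfl⟩
    refine ⟨σ ⁻¹' S, ?_⟩
    rw [Set.image_comp, Set.image_preimage_eq _ σ.surjective]

end BoolAux

noncomputable section Classify

variable {H : Type*} [NormedAddCommGroup H] [InnerProductSpace ℂ H] [FiniteDimensional ℂ H]

lemma boolean_subset_basisLat (B : Set (Submodule ℂ H)) (hB : IsBooleanSublattice B) :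
    ∃ (n : ℕ) (b : OrthonormalBasis (Fin n) ℂ H), B ⊆ basisLat ⇑b := by
  classical
  obtain ⟨hbot, htop, hinf, hsup, hcompl, hdist⟩ := hB
  set Atom : Submodule ℂ H → Prop :=
    fun a => a ∈ B ∧ a ≠ ⊥ ∧ ∀ y ∈ B, y ≤ a → y = ⊥ ∨ y = a with hAtom
  -- distinct atoms are orthogonal
  have horth : ∀ a c, Atom a → Atom c → a ≠ c → c ≤ aᗮ := by
    intro a c ha hc hne
    have hinfb : a ⊓ c = ⊥ := by
      rcases ha.2.2 (a ⊓ c) (hinf a ha.1 c hc.1) inf_le_left with h | h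
      · exact h
      · have hac : a ≤ c := h ▸ inf_le_right
        rcases hc.2.2 a ha.1 hac with h' | h'
        · exact absurd h' ha.2.1
        · exact absurd h' hne
    have hd := hdist c hc.1 a ha.1 aᗮ (hcompl a ha.1)
    rw [Submodule.sup_orthogonal_of_hasOrthogonalProjection, inf_top_eq] at hd
    calc c = c ⊓ a ⊔ c ⊓ aᗮ := hd
    _ = c ⊓ aᗮ := by rw [inf_comm c a, hinfb, bot_sup_eq]
    _ ≤ aᗮ := inf_le_right
  -- every nonzero element of B has an atom below it
  have hatom_below : ∀ n (x : Submodule ℂ H), Module.finrank ℂ x ≤ n → x ∈ B → x ≠ ⊥ →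
      ∃ a, Atom a ∧ a ≤ x := by
    intro n
    induction n with
    | zero =>
      intro x hn hxB hx
      exact absurd (Submodule.finrank_eq_zero.1 (Nat.le_zero.1 hn)) hx
    | succ n ih =>
      intro x hn hxB hx
      by_cases hax : ∀ y ∈ B, y ≤ x → y = ⊥ ∨ y = x
      · exact ⟨x, ⟨hxB, hx, hax⟩, le_rfl⟩
      · push_neg at hax
        obtain ⟨y, hyB, hyx, hy1, hy2⟩ := hax
        have hlt : Module.finrank ℂ y < Module.finrank ℂ x :=
          Submodule.finrank_lt_finrank_of_lt (lt_of_le_of_ne hyx hy2)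
        obtain ⟨a, ha, hay⟩ := ih y (by omega) hyB hy1
        exact ⟨a, ha, hay.trans hyx⟩
  -- every element of B is a finite sup of atoms
  have hdecomp : ∀ n (x : Submodule ℂ H), Module.finrank ℂ x ≤ n → x ∈ B →
      ∃ s : Finset (Submodule ℂ H), (∀ a ∈ s, Atom a) ∧ x = s.sup id := by
    intro n
    induction n with
    | zero =>
      intro x hn hxB
      have hx : x = ⊥ := Submodule.finrank_eq_zero.1 (Nat.le_zero.1 hn)
      exact ⟨∅, by simp, by simp [hx]⟩
    | succ n ih =>
      intro x hn hxB
      by_cases hx : x = ⊥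
      · exact ⟨∅, by simp, by simp [hx]⟩
      · obtain ⟨a, ha, hax⟩ := hatom_below (n + 1) x hn hxB hx
        have hyB : x ⊓ aᗮ ∈ B := hinf x hxB aᗮ (hcompl a ha.1)
        have hxay : x = a ⊔ x ⊓ aᗮ := by
          have hd := hdist x hxB a ha.1 aᗮ (hcompl a ha.1)
          rwa [Submodule.sup_orthogonal_of_hasOrthogonalProjection, inf_top_eq,
            inf_eq_right.2 hax] at hd
        have hylt : x ⊓ aᗮ < x := by
          refine lt_of_le_of_ne inf_le_left ?_
          intro h
          have h2 : a ≤ aᗮ := hax.trans (h ▸ inf_le_right)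
          have h3 : a ≤ ⊥ := by
            rw [← (Submodule.orthogonal_disjoint a).eq_bot]
            exact le_inf le_rfl h2
          exact ha.2.1 (le_bot_iff.1 h3)
        have hlt : Module.finrank ℂ ↥(x ⊓ aᗮ) < Module.finrank ℂ x :=
          Submodule.finrank_lt_finrank_of_lt hylt
        obtain ⟨s, hs, hsy⟩ := ih (x ⊓ aᗮ) (by omega) hyB
        refine ⟨insert a s, ?_, ?_⟩
        · intro t ht
          rcases Finset.mem_insert.1 ht with h | h
          · exact h ▸ ha
          · exact hs t h
        · rw [Finset.sup_insert, ← hsy]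
          exact hxay
  obtain ⟨T, hT, hTtop⟩ :=
    hdecomp (Module.finrank ℂ (⊤ : Submodule ℂ H)) ⊤ le_rfl htop
  -- every atom belongs to T
  have hatomT : ∀ a, Atom a → a ∈ T := by
    intro a ha
    by_contra haT
    have h1 : T.sup id ≤ aᗮ := by
      apply Finset.sup_le
      intro t ht
      exact horth a t ha (hT t ht) fun h => haT (h ▸ ht)
    rw [← hTtop] at h1
    have h2 : a ≤ ⊥ := by
      calc a ≤ aᗮᗮ := Submodule.le_orthogonal_orthogonal a
      _ ≤ (⊤ : Submodule ℂ H)ᗮ := Submodule.orthogonal_le (le_top.trans h1)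
      _ = ⊥ := Submodule.top_orthogonal_eq_bot
    exact ha.2.1 (le_bot_iff.1 h2)
  -- build orthonormal basis adapted to T
  set ιT := Σ t : {t : Submodule ℂ H // t ∈ T}, Fin (Module.finrank ℂ t.1) with hιT
  set e : ιT → H := fun p => ((stdOrthonormalBasis ℂ p.1.1) p.2 : H) with he
  have hKspan : ∀ K : Submodule ℂ H,
      span ℂ (Set.range fun i => ((stdOrthonormalBasis ℂ K) i : H)) = K := by
    intro K
    have h1 : span ℂ (Set.range ⇑(stdOrthonormalBasis ℂ K)) = (⊤ : Submodule ℂ K) := by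
      rw [← (stdOrthonormalBasis ℂ K).coe_toBasis]
      exact (stdOrthonormalBasis ℂ K).toBasis.span_eq
    have h2 := congrArg (Submodule.map K.subtype) h1
    rwa [Submodule.map_span, Submodule.map_subtype_top, ← Set.range_comp] at h2
  have horthe : Orthonormal ℂ e := by
    rw [orthonormal_iff_ite]
    rintro ⟨⟨t, ht⟩, i⟩ ⟨⟨t', ht'⟩, j⟩
    by_cases htt : t = t'
    · subst htt
      have honb := (stdOrthonormalBasis ℂ t).orthonormal
      rw [orthonormal_iff_ite] at honb
      by_cases hij : i = j
      · subst hij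
        rw [if_pos rfl]
        have h2 := honb i i
        rw [if_pos rfl, Submodule.coe_inner] at h2
        exact h2
      · have hne : (⟨⟨t, ht⟩, i⟩ : ιT) ≠ ⟨⟨t, ht'⟩, j⟩ := by
          intro h
          exact hij (by injection h with h1 h2)
        rw [if_neg hne]
        have h2 := honb i j
        rw [if_neg hij, Submodule.coe_inner] at h2
        exact h2
    · have hne : (⟨⟨t, ht⟩, i⟩ : ιT) ≠ ⟨⟨t', ht'⟩, j⟩ := by
        intro h
        exact htt (by injection h with h1 h2; injection h1)
      rw [if_neg hne]
      have hto : t' ≤ tᗮ := horth t t' (hT t ht) (hT t' ht') htt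
      have hmem : ((stdOrthonormalBasis ℂ t') j : H) ∈ tᗮ :=
        hto (SetLike.coe_mem _)
      exact (Submodule.mem_orthogonal t _).1 hmem _ (SetLike.coe_mem _)
  have hspan : span ℂ (Set.range e) = ⊤ := by
    refine le_antisymm le_top ?_
    rw [hTtop]
    apply Finset.sup_le
    intro t ht
    rw [id, ← hKspan t]
    apply Submodule.span_mono
    rintro - ⟨i, rfl⟩
    exact ⟨⟨⟨t, ht⟩, i⟩, rfl⟩
  let b : OrthonormalBasis ιT ℂ H := OrthonormalBasis.mk horthe hspan.ge
  have hBsub : B ⊆ basisLat e := by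
    intro x hxB
    obtain ⟨s, hs, hsx⟩ := hdecomp (Module.finrank ℂ x) x le_rfl hxB
    refine ⟨{p : ιT | p.1.1 ∈ s}, ?_⟩
    rw [hsx]
    apply le_antisymm
    · apply Finset.sup_le
      intro t ht
      rw [id, ← hKspan t]
      apply Submodule.span_mono
      rintro - ⟨i, rfl⟩
      exact ⟨⟨⟨t, hatomT t (hs t ht)⟩, i⟩, ht, rfl⟩
    · rw [Submodule.span_le]
      rintro - ⟨⟨⟨t, htT⟩, i⟩, hp, rfl⟩
      exact Finset.le_sup (f := id) hp (SetLike.coe_mem _)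
  refine ⟨Fintype.card ιT, b.reindex (Fintype.equivFin ιT), ?_⟩
  have hco : ⇑(b.reindex (Fintype.equivFin ιT)) = ⇑b ∘ ⇑(Fintype.equivFin ιT).symm := by
    ext j; simp
  rw [hco, basisLat_comp_equiv, OrthonormalBasis.coe_mk]
  exact hBsub

lemma maximal_eq_basisLat (B : Set (Submodule ℂ H)) (hB : IsMaximalBooleanSublattice B) :
    ∃ (n : ℕ) (b : OrthonormalBasis (Fin n) ℂ H), B = basisLat ⇑b := by
  obtain ⟨n, b, hsub⟩ := boolean_subset_basisLat B hB.1
  exact ⟨n, b, (hB.2 _ (basisLat_boolean b) hsub).symm⟩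

end Classify

/-- Any two maximal Boolean sublattices of `Submodule ℂ H` are related by a unitary
operator: there is a linear isometry `U` of `H` onto itself whose induced map on
subspaces carries one onto the other. -/
theorem maximalBooleanSublattices_unitarily_equivalent {H : Type*}
    [NormedAddCommGroup H] [InnerProductSpace ℂ H] [FiniteDimensional ℂ H]
    (B B' : Set (Submodule ℂ H))
    (hB : IsMaximalBooleanSublattice B) (hB' : IsMaximalBooleanSublattice B') :
    ∃ U : H ≃ₗᵢ[ℂ] H,
      {K' : Submodule ℂ H | ∃ K ∈ B, K' = Submodule.map (U.toLinearEquiv : H →ₗ[ℂ] H) K} = B' := by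
  classical
  obtain ⟨n, b, hBeq⟩ := maximal_eq_basisLat B hB
  obtain ⟨m, b', hBeq'⟩ := maximal_eq_basisLat B' hB'
  have hnm : n = m := by
    have h1 := Module.finrank_eq_card_basis b.toBasis
    have h2 := Module.finrank_eq_card_basis b'.toBasis
    simp only [Fintype.card_fin] at h1 h2
    omega
  subst hnm
  refine ⟨b.repr.trans b'.repr.symm, ?_⟩
  have hUb : ∀ i, (b.repr.trans b'.repr.symm) (b i) = b' i := by
    intro i
    rw [LinearIsometryEquiv.trans_apply, OrthonormalBasis.repr_self,
      OrthonormalBasis.repr_symm_single]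
  have hUcoe : ⇑(((b.repr.trans b'.repr.symm).toLinearEquiv : H →ₗ[ℂ] H)) =
      ⇑(b.repr.trans b'.repr.symm) := rfl
  have hmap : ∀ S : Set (Fin n),
      Submodule.map ((b.repr.trans b'.repr.symm).toLinearEquiv : H →ₗ[ℂ] H)
        (span ℂ (⇑b '' S)) = span ℂ (⇑b' '' S) := by
    intro S
    rw [Submodule.map_span, hUcoe, ← Set.image_comp]
    congr 1
    exact Set.image_congr fun i _ => hUb i
  rw [hBeq, hBeq']
  ext K
  simp only [Set.mem_setOf_eq]
  constructor
  · rintro ⟨K, ⟨S, rfl⟩, rfl⟩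
    exact ⟨S, hmap S⟩
  · rintro ⟨S, rfl⟩
    exact ⟨span ℂ (⇑b '' S), ⟨S, rfl⟩, (hmap S).symm⟩
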